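/- Quillen's Theorem A for localizations (1-categorical version): let f : C ⥤ D be a functor of categories equipped with wide subcategories (markings) W_C ⊆ C and W_D ⊆ D containing all identities, with f(W_C) ⊆ W_D. Equip each comma category d ↓ f with the marking of morphisms whose C-component lies in W_C, and d ↓ D = d/D with the marking induced by W_D. If for every object d ∈ D the canonical functor d ↓ f → d/D induces an equivalence on localizations L_{W}(d ↓ f) → L_{W}(d/D), then the induced functor on localizations L_{W_C}(C) → L_{W_D}(D) is an equivalence of categories. -/

import Mathlib

open CategoryTheory

universe v₁ v₂ u₁ u₂

variable {C : Type u₁} [Category.{v₁} C] {D : Type u₂} [Category.{v₂} D]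

/-- The marking on the comma category `d ↓ f` induced by a marking of `C`. -/
def sliceMark (W : MorphismProperty C) (f : C ⥤ D) (d : D) :
    MorphismProperty (StructuredArrow d f) :=
  fun _ _ φ => W φ.right

/-- The marking on the coslice `d/D` induced by a marking of `D`. -/
def underMark (W : MorphismProperty D) (d : D) : MorphismProperty (Under d) :=
  fun _ _ φ => W φ.right

/-- The canonical functor `d ↓ f ⥤ d/D`, `(c, g : d ⟶ f c) ↦ g`. -/
@[simps]
def sliceFunctor (f : C ⥤ D) (d : D) : StructuredArrow d f ⥤ Under d where
  obj g := Under.mk g.hom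
  map φ := Under.homMk (f.map φ.right) (StructuredArrow.w φ)

theorem sliceFunctor_inverts (f : C ⥤ D) (W_C : MorphismProperty C)
    (W_D : MorphismProperty D)
    (hf : ∀ {a b : C} (g : a ⟶ b), W_C g → W_D (f.map g)) (d : D) :
    (sliceMark W_C f d).IsInvertedBy (sliceFunctor f d ⋙ (underMark W_D d).Q) :=
  fun _ _ φ hφ =>
    Localization.inverts (underMark W_D d).Q (underMark W_D d)
      ((sliceFunctor f d).map φ) (hf φ.right hφ)

theorem comp_Q_inverts (f : C ⥤ D) (W_C : MorphismProperty C)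
    (W_D : MorphismProperty D)
    (hf : ∀ {a b : C} (g : a ⟶ b), W_C g → W_D (f.map g)) :
    W_C.IsInvertedBy (f ⋙ W_D.Q) :=
  fun _ _ g hg => Localization.inverts W_D.Q W_D (f.map g) (hf g hg)

namespace QuillenAMarked

open Functor

variable (f : C ⥤ D) (W_C : MorphismProperty C) (W_D : MorphismProperty D)
variable (hf : ∀ {a b : C} (g : a ⟶ b), W_C g → W_D (f.map g))

@[simps]
def pullSlice {d d' : D} (u : d ⟶ d') : StructuredArrow d' f ⥤ StructuredArrow d f where
  obj x := StructuredArrow.mk (u ≫ x.hom)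
  map {x y} φ := StructuredArrow.homMk φ.right
    (by dsimp; rw [Category.assoc, StructuredArrow.w])

@[simps]
def pullUnder {d d' : D} (u : d ⟶ d') : Under d' ⥤ Under d where
  obj y := Under.mk (u ≫ y.hom)
  map {x y} φ := Under.homMk φ.right (by dsimp; rw [Category.assoc, Under.w])

theorem proj_inverts (d : D) :
    (sliceMark W_C f d).IsInvertedBy (StructuredArrow.proj d f ⋙ W_C.Q) :=
  fun _ _ φ hφ => Localization.inverts W_C.Q W_C φ.right hφ

noncomputable abbrev Td (d : D) :
    (sliceMark W_C f d).Localization ⥤ (underMark W_D d).Localization :=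
  Localization.lift (sliceFunctor f d ⋙ (underMark W_D d).Q)
    (sliceFunctor_inverts f W_C W_D hf d) (sliceMark W_C f d).Q

/-- `Q_slice ⋙ T_d ≅ slice ⋙ Q_under`. -/
noncomputable def faT (d : D) :
    (sliceMark W_C f d).Q ⋙ Td f W_C W_D hf d ≅ sliceFunctor f d ⋙ (underMark W_D d).Q :=
  Localization.fac _ _ _

section Gadget

variable {E : Type*} [Category E] {d : D}

/-- The descent of a functor `Under d ⥤ E` inverting the marking. -/
noncomputable abbrev bar (P : Under d ⥤ E) (hP : (underMark W_D d).IsInvertedBy P) :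
    (underMark W_D d).Localization ⥤ E :=
  Localization.lift P hP (underMark W_D d).Q

/-- `T_d ⋙ bar P` lifts `slice ⋙ P` along the slice localization. -/
noncomputable def sliceLifting (P : Under d ⥤ E) (hP : (underMark W_D d).IsInvertedBy P) :
    Localization.Lifting (sliceMark W_C f d).Q (sliceMark W_C f d)
      (sliceFunctor f d ⋙ P) (Td f W_C W_D hf d ⋙ bar W_D P hP) :=
  ⟨isoWhiskerRight (faT f W_C W_D hf d) (bar W_D P hP) ≪≫
    isoWhiskerLeft (sliceFunctor f d)
      (Localization.Lifting.iso (underMark W_D d).Q (underMark W_D d) P (bar W_D P hP))⟩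

variable (P₁ P₂ : Under d ⥤ E)
theorem restrict_ext (h₁ : (underMark W_D d).IsInvertedBy P₁)
    (h₂ : (underMark W_D d).IsInvertedBy P₂)
    (hd : (Td f W_C W_D hf d).IsEquivalence) (τ₁ τ₂ : P₁ ⟶ P₂)
    (hτ : ∀ x : StructuredArrow d f, τ₁.app (Under.mk x.hom) = τ₂.app (Under.mk x.hom)) :
    τ₁ = τ₂ := by
  letI := hd
  set B₁ := bar W_D P₁ h₁ with hB₁
  set B₂ := bar W_D P₂ h₂ with hB₂
  set t₁ := Localization.liftNatTrans (underMark W_D d).Q (underMark W_D d) P₁ P₂ B₁ B₂ τ₁ with ht₁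
  set t₂ := Localization.liftNatTrans (underMark W_D d).Q (underMark W_D d) P₁ P₂ B₁ B₂ τ₂ with ht₂
  have hnat : ∀ (t : B₁ ⟶ B₂) (x : StructuredArrow d f),
      t.app (((sliceMark W_C f d).Q ⋙ Td f W_C W_D hf d).obj x) =
        B₁.map ((faT f W_C W_D hf d).hom.app x) ≫
          t.app ((underMark W_D d).Q.obj ((sliceFunctor f d).obj x)) ≫
          B₂.map ((faT f W_C W_D hf d).inv.app x) := by
    intro t x
    have hn : B₁.map ((faT f W_C W_D hf d).hom.app x) ≫
        t.app ((underMark W_D d).Q.obj ((sliceFunctor f d).obj x)) =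
        t.app (((sliceMark W_C f d).Q ⋙ Td f W_C W_D hf d).obj x) ≫
          B₂.map ((faT f W_C W_D hf d).hom.app x) :=
      t.naturality ((faT f W_C W_D hf d).hom.app x)
    rw [← Category.assoc, hn, Category.assoc, ← Functor.map_comp]
    simp
  have key : t₁ = t₂ := by
    apply ((whiskeringLeft _ _ E).obj (Td f W_C W_D hf d)).map_injective
    apply Localization.natTrans_ext (sliceMark W_C f d).Q (sliceMark W_C f d)
    intro x
    show t₁.app (((sliceMark W_C f d).Q ⋙ Td f W_C W_D hf d).obj x) =
      t₂.app (((sliceMark W_C f d).Q ⋙ Td f W_C W_D hf d).obj x)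
    rw [hnat t₁ x, hnat t₂ x, ht₁, ht₂]
    rw [Localization.liftNatTrans_app, Localization.liftNatTrans_app]
    erw [hτ x]
    rfl
  ext y
  have e₁ := Localization.liftNatTrans_app (underMark W_D d).Q (underMark W_D d) P₁ P₂ B₁ B₂ τ₁ y
  have e₂ := Localization.liftNatTrans_app (underMark W_D d).Q (underMark W_D d) P₁ P₂ B₁ B₂ τ₂ y
  rw [← ht₁] at e₁
  rw [← ht₂] at e₂
  rw [key] at e₁
  rw [e₂] at e₁
  have := congrArg (fun z => (Localization.Lifting.iso (underMark W_D d).Q (underMark W_D d)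
      P₁ B₁).inv.app y ≫ z ≫ (Localization.Lifting.iso (underMark W_D d).Q (underMark W_D d)
      P₂ B₂).hom.app y) e₁
  simpa using this.symm
/-- The lifted iso between descended functors. -/
noncomputable def barIso (h₁ : (underMark W_D d).IsInvertedBy P₁)
    (h₂ : (underMark W_D d).IsInvertedBy P₂)
    (hd : (Td f W_C W_D hf d).IsEquivalence)
    (e : sliceFunctor f d ⋙ P₁ ≅ sliceFunctor f d ⋙ P₂) :
    bar W_D P₁ h₁ ≅ bar W_D P₂ h₂ :=
  letI := hd
  letI := sliceLifting f W_C W_D hf P₁ h₁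
  letI := sliceLifting f W_C W_D hf P₂ h₂
  ((whiskeringLeft _ _ E).obj (Td f W_C W_D hf d)).preimageIso
    (Localization.liftNatIso (sliceMark W_C f d).Q (sliceMark W_C f d)
      (sliceFunctor f d ⋙ P₁) (sliceFunctor f d ⋙ P₂)
      (Td f W_C W_D hf d ⋙ bar W_D P₁ h₁) (Td f W_C W_D hf d ⋙ bar W_D P₂ h₂) e)

/-- The extension of an isomorphism along the slice restriction. -/
noncomputable def extendIso (h₁ : (underMark W_D d).IsInvertedBy P₁)
    (h₂ : (underMark W_D d).IsInvertedBy P₂)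
    (hd : (Td f W_C W_D hf d).IsEquivalence)
    (e : sliceFunctor f d ⋙ P₁ ≅ sliceFunctor f d ⋙ P₂) : P₁ ≅ P₂ :=
  (Localization.Lifting.iso (underMark W_D d).Q (underMark W_D d) P₁ (bar W_D P₁ h₁)).symm ≪≫
    isoWhiskerLeft (underMark W_D d).Q (barIso f W_C W_D hf P₁ P₂ h₁ h₂ hd e) ≪≫
    Localization.Lifting.iso (underMark W_D d).Q (underMark W_D d) P₂ (bar W_D P₂ h₂)

theorem extendIso_hom_app (h₁ : (underMark W_D d).IsInvertedBy P₁)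
    (h₂ : (underMark W_D d).IsInvertedBy P₂)
    (hd : (Td f W_C W_D hf d).IsEquivalence)
    (e : sliceFunctor f d ⋙ P₁ ≅ sliceFunctor f d ⋙ P₂) (x : StructuredArrow d f) :
    (extendIso f W_C W_D hf P₁ P₂ h₁ h₂ hd e).hom.app (Under.mk x.hom) = e.hom.app x := by
  letI := hd
  letI l₁ := sliceLifting f W_C W_D hf P₁ h₁
  letI l₂ := sliceLifting f W_C W_D hf P₂ h₂
  have key : ∀ s : (sliceMark W_C f d).Localization,
      (barIso f W_C W_D hf P₁ P₂ h₁ h₂ hd e).hom.app ((Td f W_C W_D hf d).obj s) =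
      (Localization.liftNatTrans (sliceMark W_C f d).Q (sliceMark W_C f d)
        (sliceFunctor f d ⋙ P₁) (sliceFunctor f d ⋙ P₂)
        (Td f W_C W_D hf d ⋙ bar W_D P₁ h₁) (Td f W_C W_D hf d ⋙ bar W_D P₂ h₂)
        e.hom).app s := by
    intro s
    have h0 : whiskerLeft (Td f W_C W_D hf d)
        (barIso f W_C W_D hf P₁ P₂ h₁ h₂ hd e).hom =
        (Localization.liftNatIso (sliceMark W_C f d).Q (sliceMark W_C f d)
          (sliceFunctor f d ⋙ P₁) (sliceFunctor f d ⋙ P₂)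
          (Td f W_C W_D hf d ⋙ bar W_D P₁ h₁) (Td f W_C W_D hf d ⋙ bar W_D P₂ h₂) e).hom :=
      ((whiskeringLeft _ _ E).obj (Td f W_C W_D hf d)).map_preimage _
    have h1 := congr_app h0 s
    rw [Localization.liftNatIso_hom] at h1
    exact h1
  have nat : (barIso f W_C W_D hf P₁ P₂ h₁ h₂ hd e).hom.app
        ((underMark W_D d).Q.obj (Under.mk x.hom)) =
      (bar W_D P₁ h₁).map ((faT f W_C W_D hf d).inv.app x) ≫
        (barIso f W_C W_D hf P₁ P₂ h₁ h₂ hd e).hom.app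
          ((Td f W_C W_D hf d).obj ((sliceMark W_C f d).Q.obj x)) ≫
        (bar W_D P₂ h₂).map ((faT f W_C W_D hf d).hom.app x) := by
    have hn : (bar W_D P₁ h₁).map ((faT f W_C W_D hf d).hom.app x) ≫
        (barIso f W_C W_D hf P₁ P₂ h₁ h₂ hd e).hom.app
          ((underMark W_D d).Q.obj (Under.mk x.hom)) =
        (barIso f W_C W_D hf P₁ P₂ h₁ h₂ hd e).hom.app
          ((Td f W_C W_D hf d).obj ((sliceMark W_C f d).Q.obj x)) ≫
          (bar W_D P₂ h₂).map ((faT f W_C W_D hf d).hom.app x) :=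
      (barIso f W_C W_D hf P₁ P₂ h₁ h₂ hd e).hom.naturality ((faT f W_C W_D hf d).hom.app x)
    rw [← hn]
    exact (Iso.map_inv_hom_id_assoc ((faT f W_C W_D hf d).app x) (bar W_D P₁ h₁) _).symm
  have step3 : (barIso f W_C W_D hf P₁ P₂ h₁ h₂ hd e).hom.app
        ((Td f W_C W_D hf d).obj ((sliceMark W_C f d).Q.obj x)) =
      (Localization.Lifting.iso (sliceMark W_C f d).Q (sliceMark W_C f d)
        (sliceFunctor f d ⋙ P₁) (Td f W_C W_D hf d ⋙ bar W_D P₁ h₁)).hom.app x ≫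
      e.hom.app x ≫
      (Localization.Lifting.iso (sliceMark W_C f d).Q (sliceMark W_C f d)
        (sliceFunctor f d ⋙ P₂) (Td f W_C W_D hf d ⋙ bar W_D P₂ h₂)).inv.app x := by
    rw [key ((sliceMark W_C f d).Q.obj x)]
    exact Localization.liftNatTrans_app _ _ _ _ _ _ _ _
  show (Localization.Lifting.iso (underMark W_D d).Q (underMark W_D d) P₁
        (bar W_D P₁ h₁)).inv.app (Under.mk x.hom) ≫
      (barIso f W_C W_D hf P₁ P₂ h₁ h₂ hd e).hom.app
        ((underMark W_D d).Q.obj (Under.mk x.hom)) ≫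
      (Localization.Lifting.iso (underMark W_D d).Q (underMark W_D d) P₂
        (bar W_D P₂ h₂)).hom.app (Under.mk x.hom) = e.hom.app x
  rw [nat, step3]
  have u₁ : (Localization.Lifting.iso (sliceMark W_C f d).Q (sliceMark W_C f d)
      (sliceFunctor f d ⋙ P₁) (Td f W_C W_D hf d ⋙ bar W_D P₁ h₁)).hom.app x =
      (bar W_D P₁ h₁).map ((faT f W_C W_D hf d).hom.app x) ≫
      (Localization.Lifting.iso (underMark W_D d).Q (underMark W_D d) P₁
        (bar W_D P₁ h₁)).hom.app (Under.mk x.hom) := by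
    rfl
  have u₂ : (Localization.Lifting.iso (sliceMark W_C f d).Q (sliceMark W_C f d)
      (sliceFunctor f d ⋙ P₂) (Td f W_C W_D hf d ⋙ bar W_D P₂ h₂)).inv.app x =
      (Localization.Lifting.iso (underMark W_D d).Q (underMark W_D d) P₂
        (bar W_D P₂ h₂)).inv.app (Under.mk x.hom) ≫
      (bar W_D P₂ h₂).map ((faT f W_C W_D hf d).inv.app x) := by
    rfl
  rw [u₁, u₂]
  erw [Category.assoc, Category.assoc, Category.assoc, Category.assoc, Category.assoc, Category.assoc]
  erw [Iso.map_inv_hom_id_assoc ((faT f W_C W_D hf d).app x) (bar W_D P₁ h₁), Iso.inv_hom_id_app_assoc, Iso.map_inv_hom_id_assoc ((faT f W_C W_D hf d).app x) (bar W_D P₂ h₂), Iso.inv_hom_id_app, Category.comp_id]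

end Gadget

section Main

/-- The localized projection `L(d ↓ f) ⥤ L C`. -/
noncomputable def Rd (d : D) :
    (sliceMark W_C f d).Localization ⥤ W_C.Localization :=
  Localization.lift (StructuredArrow.proj d f ⋙ W_C.Q) (proj_inverts f W_C d)
    (sliceMark W_C f d).Q

/-- The canonical functor `G : L C ⥤ L D` induced by `f`. -/
noncomputable abbrev Gfun : W_C.Localization ⥤ W_D.Localization :=
  Localization.lift (f ⋙ W_D.Q) (comp_Q_inverts f W_C W_D hf) W_C.Q

/-- The canonical iso `W_C.Q ⋙ G ≅ f ⋙ W_D.Q`. -/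
noncomputable def γiso : W_C.Q ⋙ Gfun f W_C W_D hf ≅ f ⋙ W_D.Q :=
  Localization.fac _ _ _

variable (h : ∀ d : D, (Td f W_C W_D hf d).IsEquivalence)

/-- quasi-inverse composed with projection: `Ḡ_d : L(d/D) ⥤ L C` -/
noncomputable def Gd (d : D) :
    (underMark W_D d).Localization ⥤ W_C.Localization :=
  letI := h d
  (Td f W_C W_D hf d).asEquivalence.inverse ⋙ Rd f W_C d

/-- `T_d ⋙ Ḡ_d ≅ R_d` -/
noncomputable def ξiso (d : D) :
    Td f W_C W_D hf d ⋙ Gd f W_C W_D hf h d ≅ Rd f W_C d :=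
  letI := h d
  isoWhiskerRight (Td f W_C W_D hf d).asEquivalence.unitIso.symm (Rd f W_C d) ≪≫
    Functor.leftUnitor _

/-- The fundamental pointwise comparison `slice ⋙ Q ⋙ Ḡ_d ≅ proj ⋙ W_C.Q`. -/
noncomputable def σiso (d : D) :
    sliceFunctor f d ⋙ (underMark W_D d).Q ⋙ Gd f W_C W_D hf h d ≅
      StructuredArrow.proj d f ⋙ W_C.Q :=
  isoWhiskerRight (faT f W_C W_D hf d).symm (Gd f W_C W_D hf h d) ≪≫
    isoWhiskerLeft (sliceMark W_C f d).Q (ξiso f W_C W_D hf h d) ≪≫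
    Localization.fac (StructuredArrow.proj d f ⋙ W_C.Q) (proj_inverts f W_C d)
      (sliceMark W_C f d).Q

/-- The key "base change" functor `Under d' ⥤ L C`. -/
noncomputable def Phi {d d' : D} (u : d ⟶ d') : Under d' ⥤ W_C.Localization :=
  pullUnder u ⋙ (underMark W_D d).Q ⋙ Gd f W_C W_D hf h d

theorem QGd_inverts (d : D) :
    (underMark W_D d).IsInvertedBy ((underMark W_D d).Q ⋙ Gd f W_C W_D hf h d) :=
  fun _ _ φ hφ => by
    have : IsIso ((underMark W_D d).Q.map φ) :=
      Localization.inverts (underMark W_D d).Q (underMark W_D d) φ hφ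
    dsimp
    infer_instance

theorem Phi_inverts {d d' : D} (u : d ⟶ d') :
    (underMark W_D d').IsInvertedBy (Phi f W_C W_D hf h u) :=
  fun _ _ φ hφ => by
    dsimp [Phi]
    have : IsIso ((underMark W_D d).Q.map ((pullUnder u).map φ)) :=
      Localization.inverts (underMark W_D d).Q (underMark W_D d) _ hφ
    infer_instance

theorem pull_slice_map {d d' : D} (u : d ⟶ d') {x y : StructuredArrow d' f} (φ : x ⟶ y) :
    (pullUnder u).map ((sliceFunctor f d').map φ) =
      (sliceFunctor f d).map ((pullSlice f u).map φ) := by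
  apply Under.UnderMorphism.ext
  rfl

/-- The comparison of `Φ_u` and `Q ⋙ Ḡ_{d'}` after restriction to the slice. -/
noncomputable def eIso {d d' : D} (u : d ⟶ d') :
    sliceFunctor f d' ⋙ Phi f W_C W_D hf h u ≅
      sliceFunctor f d' ⋙ ((underMark W_D d').Q ⋙ Gd f W_C W_D hf h d') :=
  NatIso.ofComponents
    (fun x => (σiso f W_C W_D hf h d).app ((pullSlice f u).obj x) ≪≫
      ((σiso f W_C W_D hf h d').app x).symm)
    (fun {x y} φ => by
      have n₁ := (σiso f W_C W_D hf h d).hom.naturality ((pullSlice f u).map φ)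
      have n₂ := (σiso f W_C W_D hf h d').hom.naturality φ
      dsimp [Phi] at *
      have n₂' := congrArg (fun z => (σiso f W_C W_D hf h d').inv.app x ≫ z ≫
        (σiso f W_C W_D hf h d').inv.app y) n₂
      simp only [Category.assoc, Iso.hom_inv_id_app, Category.comp_id,
        Iso.inv_hom_id_app_assoc, Iso.inv_hom_id_app] at n₂'
      erw [pull_slice_map, reassoc_of% n₁]
      exact (congrArg (fun z => (σiso f W_C W_D hf h d).hom.app ((pullSlice f u).obj x) ≫ z)
        ((σiso f W_C W_D hf h d').inv.naturality φ)).trans (Category.assoc _ _ _).symm)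

/-- The canonical natural isomorphism `Φ_u ≅ Q_{d'} ⋙ Ḡ_{d'}`. -/
noncomputable def δIso {d d' : D} (u : d ⟶ d') :
    Phi f W_C W_D hf h u ≅ (underMark W_D d').Q ⋙ Gd f W_C W_D hf h d' :=
  extendIso f W_C W_D hf _ _ (Phi_inverts f W_C W_D hf h u) (QGd_inverts f W_C W_D hf h d')
    (h d') (eIso f W_C W_D hf h u)

theorem δIso_app {d d' : D} (u : d ⟶ d') (x : StructuredArrow d' f) :
    (δIso f W_C W_D hf h u).hom.app (Under.mk x.hom) =
      (σiso f W_C W_D hf h d).hom.app ((pullSlice f u).obj x) ≫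
        (σiso f W_C W_D hf h d').inv.app x := by
  rw [δIso, extendIso_hom_app f W_C W_D hf _ _ (Phi_inverts f W_C W_D hf h u)
    (QGd_inverts f W_C W_D hf h d') (h d') (eIso f W_C W_D hf h u) x]
  rfl

/-- Associativity comparison between the pullback functors. -/
noncomputable def assocNat {d d' d'' : D} (u : d ⟶ d') (u' : d' ⟶ d'') :
    pullUnder u' ⋙ Phi f W_C W_D hf h u ⟶ Phi f W_C W_D hf h (u ≫ u') where
  app y := (Gd f W_C W_D hf h d).map ((underMark W_D d).Q.map
    (Under.homMk (𝟙 y.right) (by exact (Category.comp_id _).trans (Category.assoc _ _ _).symm)))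
  naturality {y z} φ := by
    dsimp [Phi]
    rw [← Functor.map_comp, ← Functor.map_comp, ← Functor.map_comp, ← Functor.map_comp]
    have : (pullUnder u).map ((pullUnder u').map φ) ≫
        (Under.homMk (𝟙 z.right) (by exact (Category.comp_id _).trans (Category.assoc _ _ _).symm) :
          (pullUnder u).obj ((pullUnder u').obj z) ⟶ (pullUnder (u ≫ u')).obj z) =
        (Under.homMk (𝟙 y.right) (by exact (Category.comp_id _).trans (Category.assoc _ _ _).symm) :
          (pullUnder u).obj ((pullUnder u').obj y) ⟶ (pullUnder (u ≫ u')).obj y) ≫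
          (pullUnder (u ≫ u')).map φ := by
      apply Under.UnderMorphism.ext
      exact (Category.comp_id _).trans (Category.id_comp _).symm
    exact congrArg (fun z => (Gd f W_C W_D hf h d).map ((underMark W_D d).Q.map z)) this

theorem δ_cocycle {d d' d'' : D} (u : d ⟶ d') (u' : d' ⟶ d'') :
    whiskerLeft (pullUnder u') (δIso f W_C W_D hf h u).hom ≫ (δIso f W_C W_D hf h u').hom =
      assocNat f W_C W_D hf h u u' ≫ (δIso f W_C W_D hf h (u ≫ u')).hom := by
  apply restrict_ext f W_C W_D hf _ _
    (fun _ _ φ hφ => Phi_inverts f W_C W_D hf h u ((pullUnder u').map φ) hφ)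
    (QGd_inverts f W_C W_D hf h d'') (h d'')
  intro x
  have e₁ := δIso_app f W_C W_D hf h u ((pullSlice f u').obj x)
  have e₂ := δIso_app f W_C W_D hf h u' x
  have e₃ := δIso_app f W_C W_D hf h (u ≫ u') x
  have nat := (σiso f W_C W_D hf h d).hom.naturality
    (StructuredArrow.homMk (𝟙 x.right) (by erw [f.map_id, Category.comp_id]; exact (Category.assoc _ _ _).symm) :
      (pullSlice f u).obj ((pullSlice f u').obj x) ⟶ (pullSlice f (u ≫ u')).obj x)
  have hm : (assocNat f W_C W_D hf h u u').app (Under.mk x.hom) =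
      (sliceFunctor f d ⋙ (underMark W_D d).Q ⋙ Gd f W_C W_D hf h d).map
        (StructuredArrow.homMk (𝟙 x.right) (by erw [f.map_id, Category.comp_id]; exact (Category.assoc _ _ _).symm) :
          (pullSlice f u).obj ((pullSlice f u').obj x) ⟶ (pullSlice f (u ≫ u')).obj x) := by
    change (Gd f W_C W_D hf h d).map ((underMark W_D d).Q.map _) = _
    exact congrArg (fun z => (Gd f W_C W_D hf h d).map ((underMark W_D d).Q.map z))
      (Under.UnderMorphism.ext (f.map_id x.right).symm)
  change (δIso f W_C W_D hf h u).hom.app ((pullUnder u').obj (Under.mk x.hom)) ≫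
      (δIso f W_C W_D hf h u').hom.app (Under.mk x.hom) =
    (assocNat f W_C W_D hf h u u').app (Under.mk x.hom) ≫
      (δIso f W_C W_D hf h (u ≫ u')).hom.app (Under.mk x.hom)
  erw [e₁, e₂, e₃, hm, reassoc_of% nat, Category.assoc, Iso.inv_hom_id_app_assoc]
  erw [W_C.Q.map_id, Category.id_comp]
  rfl

/-- the object part of the inverse-direction functor. -/
noncomputable def Kobj (d : D) : W_C.Localization :=
  (Gd f W_C W_D hf h d).obj ((underMark W_D d).Q.obj (Under.mk (𝟙 d)))

/-- the morphism part. -/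
noncomputable def Kmap {d d' : D} (u : d ⟶ d') :
    Kobj f W_C W_D hf h d ⟶ Kobj f W_C W_D hf h d' :=
  (Gd f W_C W_D hf h d).map ((underMark W_D d).Q.map
      (Under.homMk u (by exact (Category.id_comp _).trans (Category.comp_id _).symm) : Under.mk (𝟙 d) ⟶ (pullUnder u).obj (Under.mk (𝟙 d')))) ≫
    (δIso f W_C W_D hf h u).hom.app (Under.mk (𝟙 d'))

theorem Kmap_comp {d d' d'' : D} (u : d ⟶ d') (u' : d' ⟶ d'') :
    Kmap f W_C W_D hf h (u ≫ u') = Kmap f W_C W_D hf h u ≫ Kmap f W_C W_D hf h u' := by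
  unfold Kmap
  have nat := (δIso f W_C W_D hf h u).hom.naturality
    (Under.homMk u' (by exact (Category.id_comp _).trans (Category.comp_id _).symm) : Under.mk (𝟙 d') ⟶ (pullUnder u').obj (Under.mk (𝟙 d'')))
  have coc := congr_app (δ_cocycle f W_C W_D hf h u u') (Under.mk (𝟙 d''))
  change (δIso f W_C W_D hf h u).hom.app ((pullUnder u').obj (Under.mk (𝟙 d''))) ≫
      (δIso f W_C W_D hf h u').hom.app (Under.mk (𝟙 d'')) =
    (assocNat f W_C W_D hf h u u').app (Under.mk (𝟙 d'')) ≫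
      (δIso f W_C W_D hf h (u ≫ u')).hom.app (Under.mk (𝟙 d'')) at coc
  have hH : (Under.homMk (u ≫ u') (by exact (Category.id_comp _).trans (Category.comp_id _).symm) :
      Under.mk (𝟙 d) ⟶ (pullUnder (u ≫ u')).obj (Under.mk (𝟙 d''))) =
      (Under.homMk u (by exact (Category.id_comp _).trans (Category.comp_id _).symm) : Under.mk (𝟙 d) ⟶ (pullUnder u).obj (Under.mk (𝟙 d'))) ≫
      (pullUnder u).map (Under.homMk u' (by exact (Category.id_comp _).trans (Category.comp_id _).symm) :
        Under.mk (𝟙 d') ⟶ (pullUnder u').obj (Under.mk (𝟙 d''))) ≫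
      (Under.homMk (𝟙 (Under.mk (𝟙 d'')).right) (by exact (Category.comp_id _).trans (Category.assoc _ _ _).symm) :
        (pullUnder u).obj ((pullUnder u').obj (Under.mk (𝟙 d''))) ⟶
          (pullUnder (u ≫ u')).obj (Under.mk (𝟙 d''))) := by
    apply Under.UnderMorphism.ext
    change u ≫ u' = u ≫ u' ≫ 𝟙 d''
    rw [Category.comp_id]
  calc _ = (Gd f W_C W_D hf h d).map ((underMark W_D d).Q.map
        (Under.homMk u (by exact (Category.id_comp _).trans (Category.comp_id _).symm) : Under.mk (𝟙 d) ⟶ (pullUnder u).obj (Under.mk (𝟙 d')))) ≫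
        (Phi f W_C W_D hf h u).map (Under.homMk u' (by exact (Category.id_comp _).trans (Category.comp_id _).symm) :
          Under.mk (𝟙 d') ⟶ (pullUnder u').obj (Under.mk (𝟙 d''))) ≫
        (assocNat f W_C W_D hf h u u').app (Under.mk (𝟙 d'')) ≫
        (δIso f W_C W_D hf h (u ≫ u')).hom.app (Under.mk (𝟙 d'')) := by
          erw [hH]
          simp only [Functor.map_comp]
          erw [Category.assoc, Category.assoc]
          rfl
    _ = _ := by
          erw [← coc, reassoc_of% nat]
          exact (Category.assoc _ _ _).symm

theorem Kmap_isIso {d d' : D} (u : d ⟶ d') (hu : W_D u) :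
    IsIso (Kmap f W_C W_D hf h u) := by
  unfold Kmap
  have h1 : IsIso ((underMark W_D d).Q.map
      (Under.homMk u (by exact (Category.id_comp _).trans (Category.comp_id _).symm) : Under.mk (𝟙 d) ⟶ (pullUnder u).obj (Under.mk (𝟙 d')))) :=
    Localization.inverts (underMark W_D d).Q (underMark W_D d) _ hu
  have h2 : IsIso ((Gd f W_C W_D hf h d).map ((underMark W_D d).Q.map
      (Under.homMk u (by exact (Category.id_comp _).trans (Category.comp_id _).symm) : Under.mk (𝟙 d) ⟶ (pullUnder u).obj (Under.mk (𝟙 d'))))) :=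
    Functor.map_isIso _ _
  exact @IsIso.comp_isIso _ _ _ _ _ _ _ h2
    (Iso.isIso_hom ((δIso f W_C W_D hf h u).app (Under.mk (𝟙 d'))))

theorem Kmap_id [W_D.ContainsIdentities] (d : D) :
    Kmap f W_C W_D hf h (𝟙 d) = 𝟙 (Kobj f W_C W_D hf h d) := by
  have hiso : IsIso (Kmap f W_C W_D hf h (𝟙 d)) :=
    Kmap_isIso f W_C W_D hf h (𝟙 d) (W_D.id_mem d)
  have heq : Kmap f W_C W_D hf h (𝟙 d) ≫ Kmap f W_C W_D hf h (𝟙 d) =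
      Kmap f W_C W_D hf h (𝟙 d) ≫ 𝟙 _ := by
    rw [← Kmap_comp, Category.comp_id]
    simp
  exact (cancel_epi (Kmap f W_C W_D hf h (𝟙 d))).mp heq

variable [W_D.ContainsIdentities]

/-- The inverse-direction functor `K : D ⥤ L C`. -/
noncomputable def K : D ⥤ W_C.Localization where
  obj := Kobj f W_C W_D hf h
  map := Kmap f W_C W_D hf h
  map_id d := Kmap_id f W_C W_D hf h d
  map_comp u u' := Kmap_comp f W_C W_D hf h u u'

theorem K_inverts : W_D.IsInvertedBy (K f W_C W_D hf h) :=
  fun _ _ u hu => Kmap_isIso f W_C W_D hf h u hu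

/-- The natural isomorphism `f ⋙ K ≅ W_C.Q`. -/
noncomputable def αIso : f ⋙ K f W_C W_D hf h ≅ W_C.Q :=
  NatIso.ofComponents
    (fun c => (σiso f W_C W_D hf h (f.obj c)).app (StructuredArrow.mk (𝟙 (f.obj c))))
    (fun {c c'} v => by
      have e := δIso_app f W_C W_D hf h (f.map v) (StructuredArrow.mk (𝟙 (f.obj c')))
      have nat := (σiso f W_C W_D hf h (f.obj c)).hom.naturality
        (StructuredArrow.homMk v (by exact (Category.id_comp _).trans (Category.comp_id _).symm) : StructuredArrow.mk (𝟙 (f.obj c)) ⟶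
          (pullSlice f (f.map v)).obj (StructuredArrow.mk (𝟙 (f.obj c'))))
      show Kmap f W_C W_D hf h (f.map v) ≫ _ = _
      unfold Kmap
      erw [e, Category.assoc, Category.assoc, Iso.inv_hom_id_app, Category.comp_id]
      exact nat)

theorem QGdG_inverts (d : D) :
    (underMark W_D d).IsInvertedBy ((underMark W_D d).Q ⋙
      (Gd f W_C W_D hf h d ⋙ Gfun f W_C W_D hf)) :=
  fun _ _ φ hφ => by
    have : IsIso ((underMark W_D d).Q.map φ) :=
      Localization.inverts (underMark W_D d).Q (underMark W_D d) φ hφ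
    dsimp
    infer_instance

theorem PhiG_inverts {d d' : D} (u : d ⟶ d') :
    (underMark W_D d').IsInvertedBy (Phi f W_C W_D hf h u ⋙ Gfun f W_C W_D hf) :=
  fun _ _ φ hφ => by
    have : IsIso ((Phi f W_C W_D hf h u).map φ) := Phi_inverts f W_C W_D hf h u φ hφ
    dsimp
    infer_instance

theorem forgetQ_inverts (d : D) :
    (underMark W_D d).IsInvertedBy (Under.forget d ⋙ W_D.Q) :=
  fun _ _ φ hφ => Localization.inverts W_D.Q W_D φ.right hφ

/-- restriction of the `ν`-comparison to the slice -/
noncomputable def νE (d : D) :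
    sliceFunctor f d ⋙ ((underMark W_D d).Q ⋙ (Gd f W_C W_D hf h d ⋙ Gfun f W_C W_D hf)) ≅
      sliceFunctor f d ⋙ (Under.forget d ⋙ W_D.Q) :=
  NatIso.ofComponents
    (fun y => (Gfun f W_C W_D hf).mapIso ((σiso f W_C W_D hf h d).app y) ≪≫
      (γiso f W_C W_D hf).app y.right)
    (fun {y z} φ => by
      have n₁ := congrArg (Gfun f W_C W_D hf).map ((σiso f W_C W_D hf h d).hom.naturality φ)
      have n₂ := (γiso f W_C W_D hf).hom.naturality φ.right
      dsimp at n₁ n₂ ⊢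
      rw [Functor.map_comp, Functor.map_comp] at n₁
      change _ ≫ ((Gfun f W_C W_D hf).map ((σiso f W_C W_D hf h d).hom.app z) ≫
          (γiso f W_C W_D hf).hom.app z.right) =
        ((Gfun f W_C W_D hf).map ((σiso f W_C W_D hf h d).hom.app y) ≫
          (γiso f W_C W_D hf).hom.app y.right) ≫ _
      erw [reassoc_of% n₁, Category.assoc]
      exact congrArg (fun t => (Gfun f W_C W_D hf).map ((σiso f W_C W_D hf h d).hom.app y) ≫ t) n₂)

/-- the natural transformation `Q ⋙ Ḡ_d ⋙ G ≅ forget ⋙ Q_D`. -/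
noncomputable def νIso (d : D) :
    (underMark W_D d).Q ⋙ (Gd f W_C W_D hf h d ⋙ Gfun f W_C W_D hf) ≅
      Under.forget d ⋙ W_D.Q :=
  extendIso f W_C W_D hf _ _ (QGdG_inverts f W_C W_D hf h d) (forgetQ_inverts W_D d)
    (h d) (νE f W_C W_D hf h d)

theorem νIso_app (d : D) (y : StructuredArrow d f) :
    (νIso f W_C W_D hf h d).hom.app (Under.mk y.hom) =
      (Gfun f W_C W_D hf).map ((σiso f W_C W_D hf h d).hom.app y) ≫
        (γiso f W_C W_D hf).hom.app y.right := by
  rw [νIso, extendIso_hom_app f W_C W_D hf _ _ (QGdG_inverts f W_C W_D hf h d)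
    (forgetQ_inverts W_D d) (h d) (νE f W_C W_D hf h d) y]
  rfl

/-- compatibility of `δ` with `ν`. -/
theorem νδ_compat {d d' : D} (u : d ⟶ d') :
    whiskerRight (δIso f W_C W_D hf h u).hom (Gfun f W_C W_D hf) ≫
        (νIso f W_C W_D hf h d').hom =
      (whiskerLeft (pullUnder u) (νIso f W_C W_D hf h d).hom :
        Phi f W_C W_D hf h u ⋙ Gfun f W_C W_D hf ⟶ Under.forget d' ⋙ W_D.Q) := by
  apply restrict_ext f W_C W_D hf _ _ (PhiG_inverts f W_C W_D hf h u)
    (forgetQ_inverts W_D d') (h d')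
  intro x
  simp only [NatTrans.comp_app, whiskerRight_app, whiskerLeft_app]
  have e₁ := δIso_app f W_C W_D hf h u x
  have e₂ := νIso_app f W_C W_D hf h d' x
  have e₃ := νIso_app f W_C W_D hf h d ((pullSlice f u).obj x)
  erw [e₁, e₂, e₃, ← Functor.map_comp_assoc, Category.assoc, Iso.inv_hom_id_app, Category.comp_id]
  rfl

/-- The natural isomorphism `K ⋙ G ≅ W_D.Q`. -/
noncomputable def βIso : K f W_C W_D hf h ⋙ Gfun f W_C W_D hf ≅ W_D.Q :=
  NatIso.ofComponents
    (fun d => (νIso f W_C W_D hf h d).app (Under.mk (𝟙 d)))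
    (fun {d d'} u => by
      show (Gfun f W_C W_D hf).map (Kmap f W_C W_D hf h u) ≫ _ = _
      unfold Kmap
      erw [Functor.map_comp, Category.assoc]
      have cmp := congr_app (νδ_compat f W_C W_D hf h u) (Under.mk (𝟙 d'))
      change (Gfun f W_C W_D hf).map ((δIso f W_C W_D hf h u).hom.app (Under.mk (𝟙 d'))) ≫
        (νIso f W_C W_D hf h d').hom.app (Under.mk (𝟙 d')) =
        (νIso f W_C W_D hf h d).hom.app ((pullUnder u).obj (Under.mk (𝟙 d'))) at cmp
      erw [cmp]
      exact (νIso f W_C W_D hf h d).hom.naturality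
        (Under.homMk u (by exact (Category.id_comp _).trans (Category.comp_id _).symm) : Under.mk (𝟙 d) ⟶ (pullUnder u).obj (Under.mk (𝟙 d'))))

include h in
/-- Main statement: the induced functor on localizations is an equivalence. -/
theorem main :
    (Localization.lift (f ⋙ W_D.Q) (comp_Q_inverts f W_C W_D hf) W_C.Q).IsEquivalence := by
  let H : W_D.Localization ⥤ W_C.Localization :=
    Localization.lift (K f W_C W_D hf h) (K_inverts f W_C W_D hf h) W_D.Q
  have iso2 : H ⋙ Gfun f W_C W_D hf ≅ 𝟭 _ :=
    Localization.liftNatIso W_D.Q W_D (K f W_C W_D hf h ⋙ Gfun f W_C W_D hf) W_D.Q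
      (H ⋙ Gfun f W_C W_D hf) (𝟭 _) (βIso f W_C W_D hf h)
  letI l1 : Localization.Lifting W_C.Q W_C W_C.Q (Gfun f W_C W_D hf ⋙ H) :=
    ⟨isoWhiskerRight (γiso f W_C W_D hf) H ≪≫
      isoWhiskerLeft f (Localization.Lifting.iso W_D.Q W_D (K f W_C W_D hf h) H) ≪≫
      αIso f W_C W_D hf h⟩
  have iso1 : Gfun f W_C W_D hf ⋙ H ≅ 𝟭 _ :=
    Localization.liftNatIso W_C.Q W_C W_C.Q W_C.Q (Gfun f W_C W_D hf ⋙ H) (𝟭 _)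
      (Iso.refl W_C.Q)
  exact (CategoryTheory.Equivalence.mk (Gfun f W_C W_D hf) H iso1.symm iso2).isEquivalence_functor

end Main
end QuillenAMarked

/-- Quillen's Theorem A for localizations of marked categories: if, for every `d : D`,
the canonical functor `d ↓ f ⥤ d/D` induces an equivalence on localizations (at the
markings induced by `W_C` and `W_D`), then `f` induces an equivalence
`L_{W_C} C ≌ L_{W_D} D` on localizations. -/
theorem theoremA_marked_localizations
    (f : C ⥤ D) (W_C : MorphismProperty C) (W_D : MorphismProperty D)
    [W_C.ContainsIdentities] [W_D.ContainsIdentities]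
    (hf : ∀ {a b : C} (g : a ⟶ b), W_C g → W_D (f.map g))
    (h : ∀ d : D,
      (Localization.lift (sliceFunctor f d ⋙ (underMark W_D d).Q)
        (sliceFunctor_inverts f W_C W_D hf d) (sliceMark W_C f d).Q).IsEquivalence) :
    (Localization.lift (f ⋙ W_D.Q) (comp_Q_inverts f W_C W_D hf) W_C.Q).IsEquivalence :=
  QuillenAMarked.main f W_C W_D hf h
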